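/- Let d be a positive integer. For all vectors u, w ∈ EuclideanSpace ℝ (Fin d), (‖u‖⁴ + ‖w‖⁴)/2 − ‖(u + w)/2‖⁴ ≥ (3/8)(‖u‖² − ‖w‖²)². -/

import Mathlib

theorem norm_quartic_midpoint_defect (d : ℕ) (hd : 0 < d)
    (u w : EuclideanSpace ℝ (Fin d)) :
    (‖u‖ ^ 4 + ‖w‖ ^ 4) / 2 - ‖(1 / 2 : ℝ) • (u + w)‖ ^ 4 ≥
      3 / 8 * (‖u‖ ^ 2 - ‖w‖ ^ 2) ^ 2 := by
  have h1 : ‖(1 / 2 : ℝ) • (u + w)‖ = (1 / 2) * ‖u + w‖ := by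
    rw [norm_smul]; norm_num
  have h2 : ‖u + w‖ ^ 2 = ‖u‖ ^ 2 + 2 * inner ℝ u w + ‖w‖ ^ 2 :=
    norm_add_sq_real u w
  have h3 : |inner ℝ u w| ≤ ‖u‖ * ‖w‖ := abs_real_inner_le_norm u w
  have h3' : (inner ℝ u w : ℝ) ^ 2 ≤ (‖u‖ * ‖w‖) ^ 2 := by
    have := sq_abs (inner ℝ u w : ℝ)
    nlinarith [abs_nonneg (inner ℝ u w : ℝ), norm_nonneg u, norm_nonneg w]
  have hu := norm_nonneg u
  have hw := norm_nonneg w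
  have huw := norm_nonneg (u + w)
  rw [h1]
  nlinarith [sq_nonneg (‖u‖ - ‖w‖), sq_nonneg (‖u‖ * ‖w‖ - inner ℝ u w : ℝ),
    sq_nonneg (‖u‖ ^ 2 + ‖w‖ ^ 2 - 2 * inner ℝ u w), sq_nonneg ((‖u‖ - ‖w‖) ^ 2),
    mul_nonneg hu hw, sq_nonneg (inner ℝ u w : ℝ), h2, h3']
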